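/- Under Assumptions 1–3 on the model, let π̄ be the consensus distribution and let ρ be the minimum normalized cut value (conductance) of the Markov chain with transition matrix T. Then ‖π̄ − (1/n)e‖_∞ ≤ Σ_{i,j} (2 p_ij α_ij / n) · ((1 + log n)/ρ). -/

import Mathlib

open Matrix Filter

noncomputable section

/-- the standard basis vector `e_i`. -/
def eVec {n : ℕ} (i : Fin n) : Fin n → ℝ := fun k => if k = i then 1 else 0

/-- `A_{ij} = I − (e_i−e_j)(e_i−e_j)ᵀ/2` : pairwise averaging matrix. -/
def Amat {n : ℕ} (i j : Fin n) : Matrix (Fin n) (Fin n) ℝ :=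
  1 - (2⁻¹ : ℝ) • Matrix.vecMulVec (eVec i - eVec j) (eVec i - eVec j)

/-- `J_{ij} = I − (1−ε) e_i (e_i−e_j)ᵀ` : influence matrix. -/
def Jmat {n : ℕ} (ε : ℝ) (i j : Fin n) : Matrix (Fin n) (Fin n) ℝ :=
  1 - (1 - ε) • Matrix.vecMulVec (eVec i) (eVec i - eVec j)

/-- the social network matrix `T = (1/n) Σ_{i,j} p_ij [(1−γ_ij) A_ij + γ_ij I]`. -/
def socT {n : ℕ} (p γ : Fin n → Fin n → ℝ) : Matrix (Fin n) (Fin n) ℝ :=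
  ((n : ℝ)⁻¹) • ∑ i, ∑ j, p i j •
    ((1 - γ i j) • Amat i j + γ i j • (1 : Matrix (Fin n) (Fin n) ℝ))

/-- the influence matrix `D = (1/n) Σ_{i,j} p_ij α_ij (J_ij − A_ij)`. -/
def infD {n : ℕ} (p α : Fin n → Fin n → ℝ) (ε : ℝ) : Matrix (Fin n) (Fin n) ℝ :=
  ((n : ℝ)⁻¹) • ∑ i, ∑ j, (p i j * α i j) • (Jmat ε i j - Amat i j)

/-- `isPath E i j L` : there is a directed path of length `L` from `i` to `j`. -/
def isPath {n : ℕ} (E : Fin n → Fin n → Prop) (i j : Fin n) (L : ℕ) : Prop :=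
  ∃ f : ℕ → Fin n, f 0 = i ∧ f L = j ∧ ∀ l < L, E (f l) (f (l + 1))

lemma amat_apply {n : ℕ} (i j a b : Fin n) : Amat i j a b =
    (if a = b then (1:ℝ) else 0) - 2⁻¹ *
      (((if a = i then (1:ℝ) else 0) - if a = j then 1 else 0) *
       ((if b = i then (1:ℝ) else 0) - if b = j then 1 else 0)) := by
  simp [Amat, eVec, Matrix.sub_apply, Matrix.vecMulVec_apply, Matrix.one_apply]

lemma jamat_apply {n : ℕ} (ε : ℝ) (i j a b : Fin n) : (Jmat ε i j - Amat i j) a b =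
    ((2⁻¹ * ((if a = i then (1:ℝ) else 0) - if a = j then 1 else 0)) - (1 - ε) * (if a = i then 1 else 0)) *
      ((if b = i then (1:ℝ) else 0) - if b = j then 1 else 0) := by
  simp [Jmat, Amat, eVec, Matrix.sub_apply, Matrix.vecMulVec_apply, Matrix.one_apply]
  split_ifs <;> ring


lemma socT_apply {n : ℕ} (p γ : Fin n → Fin n → ℝ) (a b : Fin n) :
    socT p γ a b = (n:ℝ)⁻¹ * ∑ i, ∑ j, p i j *
      ((1 - γ i j) * Amat i j a b + γ i j * (if a = b then 1 else 0)) := by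
  simp [socT, Matrix.sum_apply, Matrix.one_apply, mul_add, mul_ite, mul_zero]

lemma infD_apply {n : ℕ} (p α : Fin n → Fin n → ℝ) (ε : ℝ) (a b : Fin n) :
    infD p α ε a b = (n:ℝ)⁻¹ * ∑ i, ∑ j, (p i j * α i j) * (Jmat ε i j - Amat i j) a b := by
  simp [infD, Matrix.sum_apply]

lemma amat_symm {n : ℕ} (i j a b : Fin n) : Amat i j a b = Amat i j b a := by
  rw [amat_apply, amat_apply]
  split_ifs <;> simp_all <;> try ring

lemma socT_symm {n : ℕ} (p γ : Fin n → Fin n → ℝ) (a b : Fin n) :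
    socT p γ a b = socT p γ b a := by
  rw [socT_apply, socT_apply]
  congr 1
  refine Finset.sum_congr rfl fun i _ => Finset.sum_congr rfl fun j _ => ?_
  rw [amat_symm i j a b]
  congr 2
  simp [eq_comm]

lemma amat_colsum {n : ℕ} (i j b : Fin n) : ∑ a, Amat i j a b = 1 := by
  simp only [amat_apply]
  rw [Finset.sum_sub_distrib]
  simp only [← Finset.mul_sum, ← Finset.sum_mul, Finset.sum_sub_distrib]
  simp [Finset.sum_ite_eq']

lemma amat_nonneg {n : ℕ} (i j a b : Fin n) : 0 ≤ Amat i j a b := by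
  rw [amat_apply]; split_ifs <;> simp_all <;> norm_num

lemma socT_nonneg {n : ℕ} (p γ : Fin n → Fin n → ℝ) (hp : ∀ i j, 0 ≤ p i j)
    (hγ : ∀ i j, 0 ≤ γ i j) (hγ1 : ∀ i j, γ i j ≤ 1) (a b : Fin n) :
    0 ≤ socT p γ a b := by
  rw [socT_apply]
  apply mul_nonneg (by positivity)
  apply Finset.sum_nonneg; intro i _
  apply Finset.sum_nonneg; intro j _
  have h1 := amat_nonneg i j a b
  have := hp i j; have := hγ i j; have := hγ1 i j
  have : (0:ℝ) ≤ (if a = b then (1:ℝ) else 0) := by positivity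
  apply mul_nonneg (hp i j)
  apply add_nonneg (mul_nonneg (by linarith [hγ1 i j]) h1)
  exact mul_nonneg (hγ i j) this

lemma socT_colsum {n : ℕ} (p γ : Fin n → Fin n → ℝ)
    (hp_row : ∀ i, ∑ j, p i j = 1) (hn : 0 < n) (b : Fin n) :
    ∑ a, socT p γ a b = 1 := by
  have h1 : ∀ (i j : Fin n), ∑ a, p i j *
      ((1 - γ i j) * Amat i j a b + γ i j * (if a = b then (1:ℝ) else 0)) = p i j := by
    intro i j
    rw [← Finset.mul_sum, Finset.sum_add_distrib, ← Finset.mul_sum, ← Finset.mul_sum,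
      amat_colsum]
    rw [Finset.sum_ite_eq' Finset.univ b (fun _ => (1:ℝ))]
    simp
  simp only [socT_apply, ← Finset.mul_sum]
  rw [Finset.sum_comm]
  have h2 : ∀ i : Fin n, ∑ a, ∑ j, p i j *
      ((1 - γ i j) * Amat i j a b + γ i j * (if a = b then (1:ℝ) else 0)) = 1 := by
    intro i
    rw [Finset.sum_comm]
    rw [Finset.sum_congr rfl (fun j _ => h1 i j)]
    exact hp_row i
  rw [Finset.sum_congr rfl (fun i _ => h2 i)]
  simp [Finset.card_univ]
  field_simp

lemma socT_edge_pos {n : ℕ} (p γ : Fin n → Fin n → ℝ) (hp : ∀ i j, 0 ≤ p i j)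
    (hγ : ∀ i j, 0 ≤ γ i j) (hγ1 : ∀ i j, γ i j ≤ 1) (hn : 0 < n)
    (a b : Fin n) (hab : a ≠ b) (hpab : 0 < p a b) (hγab : γ a b < 1) :
    0 < socT p γ a b := by
  rw [socT_apply]
  have hF : ∀ i j : Fin n, 0 ≤ p i j *
      ((1 - γ i j) * Amat i j a b + γ i j * (if a = b then (1:ℝ) else 0)) := by
    intro i j
    apply mul_nonneg (hp i j)
    apply add_nonneg (mul_nonneg (by linarith [hγ1 i j]) (amat_nonneg i j a b))
    exact mul_nonneg (hγ i j) (by positivity)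
  have hA : Amat a b a b = 1/2 := by
    rw [amat_apply]
    norm_num [hab, Ne.symm hab]
  have hFab : 0 < p a b *
      ((1 - γ a b) * Amat a b a b + γ a b * (if a = b then (1:ℝ) else 0)) := by
    rw [hA]
    simp only [if_neg hab, mul_zero, add_zero]
    have : 0 < 1 - γ a b := by linarith
    positivity
  have hsum : 0 < ∑ i, ∑ j, p i j *
      ((1 - γ i j) * Amat i j a b + γ i j * (if a = b then (1:ℝ) else 0)) := by
    have h1 : p a b * ((1 - γ a b) * Amat a b a b + γ a b * (if a = b then (1:ℝ) else 0))
        ≤ ∑ j, p a j * ((1 - γ a j) * Amat a j a b + γ a j * (if a = b then (1:ℝ) else 0)) :=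
      Finset.single_le_sum (fun j _ => hF a j) (Finset.mem_univ b)
    have h2 : ∑ j, p a j * ((1 - γ a j) * Amat a j a b + γ a j * (if a = b then (1:ℝ) else 0))
        ≤ ∑ i, ∑ j, p i j * ((1 - γ i j) * Amat i j a b + γ i j * (if a = b then (1:ℝ) else 0)) :=
      Finset.single_le_sum (f := fun i => ∑ j, p i j * ((1 - γ i j) * Amat i j a b + γ i j * (if a = b then (1:ℝ) else 0)))
        (fun i _ => Finset.sum_nonneg fun j _ => hF i j) (Finset.mem_univ a)
    linarith
  have : (0:ℝ) < (n:ℝ)⁻¹ := by positivity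
  positivity

lemma exists_cross_edge {n : ℕ} (p : Fin n → Fin n → ℝ)
    (hconn : ∀ i j : Fin n, ∃ L, isPath (fun a b => 0 < p a b) i j L)
    (S : Finset (Fin n)) (hne : S.Nonempty) (hproper : S ≠ Finset.univ) :
    ∃ a ∈ S, ∃ b ∈ Sᶜ, 0 < p a b := by
  classical
  obtain ⟨i, hi⟩ := hne
  have : ∃ j, j ∉ S := by
    by_contra h
    push_neg at h
    exact hproper (Finset.eq_univ_iff_forall.mpr h)
  obtain ⟨j, hj⟩ := this
  obtain ⟨L, f, hf0, hfL, hstep⟩ := hconn i j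
  have hPL : f L ∉ S := hfL ▸ hj
  haveI : DecidablePred (fun l => f l ∉ S) := Classical.decPred _
  have hex : ∃ l, f l ∉ S := ⟨L, hPL⟩
  let l := Nat.find hex
  have hl : f l ∉ S := Nat.find_spec hex
  have hlL : l ≤ L := Nat.find_le hPL
  have hl0 : l ≠ 0 := by
    intro h
    rw [h] at hl
    exact hl (hf0 ▸ hi)
  have hprev : f (l - 1) ∈ S := by
    by_contra h
    exact absurd (Nat.find_min hex (Nat.sub_lt (Nat.pos_of_ne_zero hl0) one_pos)) (not_not_intro h)
  have hlt : l - 1 < L := by omega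
  have hp : 0 < p (f (l-1)) (f (l-1+1)) := hstep (l-1) hlt
  refine ⟨f (l-1), hprev, f l, Finset.mem_compl.mpr hl, ?_⟩
  have : l - 1 + 1 = l := by omega
  rwa [this] at hp

lemma dform {n : ℕ} (p α : Fin n → Fin n → ℝ) (ε : ℝ) (πbar : Fin n → ℝ) (b : Fin n) :
    ∑ a, πbar a * infD p α ε a b = (n:ℝ)⁻¹ * ∑ i, ∑ j, (p i j * α i j) *
      (((ε - 2⁻¹) * πbar i - 2⁻¹ * πbar j) *
        ((if b = i then (1:ℝ) else 0) - if b = j then 1 else 0)) := by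
  have key : ∀ i j : Fin n, ∑ a, πbar a * ((Jmat ε i j - Amat i j) a b) =
      ((ε - 2⁻¹) * πbar i - 2⁻¹ * πbar j) *
        ((if b = i then (1:ℝ) else 0) - if b = j then 1 else 0) := by
    intro i j
    simp only [jamat_apply, ← mul_assoc]
    rw [← Finset.sum_mul]
    congr 1
    have h1 : ∀ a : Fin n, πbar a * (2⁻¹ * ((if a = i then (1:ℝ) else 0) - if a = j then 1 else 0)
        - (1 - ε) * (if a = i then 1 else 0)) =
        2⁻¹ * (if a = i then πbar a else 0) - 2⁻¹ * (if a = j then πbar a else 0)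
          - (1 - ε) * (if a = i then πbar a else 0) := by
      intro a; split_ifs <;> ring
    rw [Finset.sum_congr rfl fun a _ => h1 a]
    simp only [Finset.sum_sub_distrib, ← Finset.mul_sum]
    rw [Finset.sum_ite_eq' Finset.univ i πbar, Finset.sum_ite_eq' Finset.univ j πbar]
    simp only [Finset.mem_univ, if_true]
    ring
  simp only [infD_apply]
  have h2 : ∀ a : Fin n, πbar a * ((n:ℝ)⁻¹ * ∑ i, ∑ j, (p i j * α i j) * (Jmat ε i j - Amat i j) a b)
      = (n:ℝ)⁻¹ * ∑ i, ∑ j, (p i j * α i j) * (πbar a * (Jmat ε i j - Amat i j) a b) := by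
    intro a
    simp only [Finset.mul_sum]
    refine Finset.sum_congr rfl fun i _ => ?_
    refine Finset.sum_congr rfl fun j _ => ?_
    ring
  rw [Finset.sum_congr rfl fun a _ => h2 a, ← Finset.mul_sum]
  congr 1
  rw [Finset.sum_comm]
  refine Finset.sum_congr rfl fun i _ => ?_
  rw [Finset.sum_comm]
  refine Finset.sum_congr rfl fun j _ => ?_
  rw [← Finset.mul_sum, key i j]

lemma dS_le {n : ℕ} (p α : Fin n → Fin n → ℝ) (ε : ℝ) (πbar : Fin n → ℝ)
    (hp : ∀ i j, 0 ≤ p i j) (hα : ∀ i j, 0 ≤ α i j)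
    (hπ_nonneg : ∀ i, 0 ≤ πbar i) (hπ_sum : ∑ i, πbar i = 1)
    (hε0 : 0 < ε) (hε : ε ≤ 1/2) (S : Finset (Fin n)) :
    ∑ b ∈ S, ∑ a, πbar a * infD p α ε a b ≤ (n:ℝ)⁻¹ * ∑ i, ∑ j, p i j * α i j * 2⁻¹ := by
  rw [Finset.sum_congr rfl fun b _ => dform p α ε πbar b, ← Finset.mul_sum]
  apply mul_le_mul_of_nonneg_left _ (by positivity)
  rw [Finset.sum_comm]
  apply Finset.sum_le_sum
  intro i _
  rw [Finset.sum_comm]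
  apply Finset.sum_le_sum
  intro j _
  simp only [← Finset.mul_sum]
  have hs : ∑ b ∈ S, ((if b = i then (1:ℝ) else 0) - if b = j then 1 else 0)
      = (if i ∈ S then (1:ℝ) else 0) - if j ∈ S then 1 else 0 := by
    rw [Finset.sum_sub_distrib, Finset.sum_ite_eq' S i (fun _ => (1:ℝ)),
      Finset.sum_ite_eq' S j (fun _ => (1:ℝ))]
  rw [hs]
  apply mul_le_mul_of_nonneg_left _ (mul_nonneg (hp i j) (hα i j))
  by_cases hij : i = j
  · subst hij; simp
  · have hij1 : πbar i + πbar j ≤ 1 := by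
      have h1 : ∑ k ∈ ({i, j} : Finset (Fin n)), πbar k ≤ ∑ k, πbar k :=
        Finset.sum_le_sum_of_subset_of_nonneg (Finset.subset_univ _)
          (fun k _ _ => hπ_nonneg k)
      rw [Finset.sum_pair hij, hπ_sum] at h1
      exact h1
    have h2 := hπ_nonneg i
    have h3 := hπ_nonneg j
    split_ifs <;> nlinarith

lemma cut_id {n : ℕ} (T : Matrix (Fin n) (Fin n) ℝ) (hTsym : ∀ a b, T a b = T b a)
    (hcol : ∀ b, ∑ a, T a b = 1) (x : Fin n → ℝ) (S : Finset (Fin n)) :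
    ∑ b ∈ S, (x b - ∑ a, x a * T a b) = ∑ b ∈ S, ∑ a ∈ Sᶜ, (x b - x a) * T a b := by
  have h1 : ∀ b, x b - ∑ a, x a * T a b = ∑ a, (x b - x a) * T a b := by
    intro b
    simp only [sub_mul, Finset.sum_sub_distrib, ← Finset.mul_sum, hcol, mul_one]
  rw [Finset.sum_congr rfl fun b _ => h1 b]
  have hsplit : ∀ b, ∑ a, (x b - x a) * T a b
      = (∑ a ∈ S, (x b - x a) * T a b) + ∑ a ∈ Sᶜ, (x b - x a) * T a b :=
    fun b => (Finset.sum_add_sum_compl S _).symm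
  rw [Finset.sum_congr rfl fun b _ => hsplit b, Finset.sum_add_distrib]
  have h2 : ∑ b ∈ S, ∑ a ∈ S, (x b - x a) * T a b = 0 := by
    have h3 : ∑ b ∈ S, ∑ a ∈ S, x b * T a b = ∑ b ∈ S, ∑ a ∈ S, x a * T a b := by
      rw [Finset.sum_comm]
      exact Finset.sum_congr rfl fun b _ => Finset.sum_congr rfl fun a _ => by rw [hTsym]
    simp only [sub_mul, Finset.sum_sub_distrib, h3, sub_self]
  rw [h2, zero_add]

/-- Theorem 9: under Assumptions 1–3, the consensus distribution `π̄` satisfies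
`‖π̄ − (1/n)e‖_∞ ≤ Σ_{i,j} (2 p_ij α_ij / n) · ((1 + log n)/ρ)`, where `ρ` is the
minimum normalized cut value (conductance) of the Markov chain with transition
matrix `T` (whose stationary distribution is uniform). -/
theorem stmt_12 {n : ℕ} (hn : 2 ≤ n)
    (p α β γ : Fin n → Fin n → ℝ)
    (hp_diag : ∀ i, p i i = 0) (hp_nonneg : ∀ i j, 0 ≤ p i j) (hp_row : ∀ i, ∑ j, p i j = 1)
    (hconn : ∀ i j : Fin n, ∃ L, isPath (fun a b => 0 < p a b) i j L)
    (hα : ∀ i j, 0 ≤ α i j) (hβ : ∀ i j, 0 ≤ β i j) (hγ : ∀ i j, 0 ≤ γ i j)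
    (habg : ∀ i j, α i j + β i j + γ i j = 1)
    (hint : ∀ i j, 0 < p i j → 0 < β i j + α i j)
    (ε : ℝ) (hε0 : 0 < ε) (hε : ε ≤ 1 / 2)
    -- π̄ : the consensus distribution
    (πbar : Fin n → ℝ) (hπ_nonneg : ∀ i, 0 ≤ πbar i) (hπ_sum : ∑ i, πbar i = 1)
    (hπ_stat : Matrix.vecMul πbar (socT p γ + infD p α ε) = πbar)
    -- ρ : the minimum normalized cut value (conductance) of the chain T
    (ρ : ℝ)
    (hρ : IsLeast {r : ℝ | ∃ S : Finset (Fin n), S.Nonempty ∧ S ≠ Finset.univ ∧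
      r = (∑ i ∈ S, ∑ j ∈ Sᶜ, (1 / (n : ℝ)) * socT p γ i j) /
        (((S.card : ℝ) / n) * ((Sᶜ.card : ℝ) / n))} ρ) :
    ‖(fun k => πbar k - 1 / n : Fin n → ℝ)‖ ≤
      (∑ i, ∑ j, 2 * p i j * α i j / n) * ((1 + Real.log n) / ρ) := by
  classical
  have hn0 : 0 < n := by omega
  have hnR : (0:ℝ) < n := by exact_mod_cast hn0
  have hγ1 : ∀ i j, γ i j ≤ 1 := fun i j => by
    have h1 := habg i j; have h2 := hα i j; have h3 := hβ i j; linarith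
  set x : Fin n → ℝ := fun k => πbar k - 1 / n with hxdef
  set d : Fin n → ℝ := fun b => ∑ a, πbar a * infD p α ε a b with hddef
  set B : ℝ := (n:ℝ)⁻¹ * ∑ i, ∑ j, p i j * α i j * 2⁻¹ with hBdef
  have hBnonneg : 0 ≤ B := by
    apply mul_nonneg (by positivity)
    apply Finset.sum_nonneg; intro i _
    apply Finset.sum_nonneg; intro j _
    have := hp_nonneg i j; have := hα i j; positivity
  have hcol : ∀ b, ∑ a, socT p γ a b = 1 := socT_colsum p γ hp_row hn0
  -- stationarity in coordinates
  have hstat : ∀ b, (∑ a, πbar a * socT p γ a b) + d b = πbar b := by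
    intro b
    have h := congrFun hπ_stat b
    simp only [Matrix.vecMul, dotProduct, Matrix.add_apply, mul_add,
      Finset.sum_add_distrib] at h
    exact h
  have hxb : ∀ b, x b - ∑ a, x a * socT p γ a b = d b := by
    intro b
    have e1 : ∑ a, x a * socT p γ a b
        = (∑ a, πbar a * socT p γ a b) - (1/n) * ∑ a, socT p γ a b := by
      simp only [hxdef, sub_mul, Finset.sum_sub_distrib, ← Finset.mul_sum]
    rw [e1, hcol b]
    have := hstat b
    simp only [hxdef]
    ring_nf
    ring_nf at this
    linarith
  -- cut inequality source
  have hcut : ∀ S : Finset (Fin n),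
      ∑ b ∈ S, ∑ a ∈ Sᶜ, (x b - x a) * socT p γ a b = ∑ b ∈ S, d b := by
    intro S
    rw [← cut_id (socT p γ) (socT_symm p γ) hcol x S]
    exact Finset.sum_congr rfl fun b _ => hxb b
  have hdS : ∀ S : Finset (Fin n), ∑ b ∈ S, d b ≤ B :=
    fun S => dS_le p α ε πbar hp_nonneg hα hπ_nonneg hπ_sum hε0 hε S
  -- ρ is positive
  have hρpos : 0 < ρ := by
    obtain ⟨S₀, hS₀ne, hS₀prop, hρeq⟩ := hρ.1
    rw [hρeq]
    apply div_pos
    · obtain ⟨a, ha, b, hb, hpab⟩ := exists_cross_edge p hconn S₀ hS₀ne hS₀prop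
      have hab : a ≠ b := by
        intro h; rw [h] at hpab; rw [hp_diag b] at hpab; exact lt_irrefl 0 hpab
      have hTpos : 0 < socT p γ a b := by
        apply socT_edge_pos p γ hp_nonneg hγ hγ1 hn0 a b hab hpab
        have := hint a b hpab; have := habg a b; linarith
      have hnn : ∀ i j : Fin n, 0 ≤ (1 / (n:ℝ)) * socT p γ i j := fun i j =>
        mul_nonneg (by positivity) (socT_nonneg p γ hp_nonneg hγ hγ1 i j)
      apply Finset.sum_pos'
      · intro i _; exact Finset.sum_nonneg fun j _ => hnn i j
      · refine ⟨a, ha, Finset.sum_pos' (fun j _ => hnn a j) ⟨b, hb, ?_⟩⟩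
        have : (0:ℝ) < 1 / n := by positivity
        positivity
    · have hc1 : 0 < S₀.card := Finset.card_pos.mpr hS₀ne
      have hlt : S₀.card < n := by
        have h1 : S₀.card ≤ n := by simpa using Finset.card_le_univ S₀
        rcases lt_or_eq_of_le h1 with h | h
        · exact h
        · exact absurd ((Finset.card_eq_iff_eq_univ S₀).mp (by simpa using h)) hS₀prop
      have hc2 : 0 < S₀ᶜ.card := by
        rw [Finset.card_compl, Fintype.card_fin]; omega
      have : (0:ℝ) < S₀.card := by exact_mod_cast hc1
      have : (0:ℝ) < S₀ᶜ.card := by exact_mod_cast hc2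
      positivity
  clear_value d B
  -- sorting
  let σ : Equiv.Perm (Fin n) := Tuple.sort x
  have hmono : Monotone (x ∘ σ) := Tuple.monotone_sort x
  clear_value σ
  set Y : ℕ → ℝ := fun k => x (σ ⟨min k (n-1), by omega⟩) with hYdef
  have hYeq : ∀ k (hk : k < n), Y k = x (σ ⟨k, hk⟩) := by
    intro k hk
    have hmin : min k (n-1) = k := by omega
    simp only [hYdef, hmin]
  clear_value Y
  have hYmono : ∀ a b : ℕ, a ≤ b → Y a ≤ Y b := by
    intro a b hab
    simp only [hYdef]
    apply hmono
    simp only [Fin.mk_le_mk]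
    omega
  -- the per-level-set step
  have step : ∀ m, m < n - 1 → Y (m+1) - Y m ≤
      B * n / (ρ * (((n - (m+1) : ℕ) : ℝ) * ((m+1 : ℕ) : ℝ))) := by
    intro m hm
    set k : ℕ := m + 1 with hkdef
    have hk : k < n := by omega
    set S : Finset (Fin n) := Finset.map σ.toEmbedding (Finset.Ici (⟨k, hk⟩ : Fin n))
      with hSdef
    have hcard : S.card = n - k := by
      rw [Finset.card_map, Fin.card_Ici]
    have hcardc : Sᶜ.card = k := by
      rw [Finset.card_compl, Fintype.card_fin, hcard]; omega
    have hne : S.Nonempty :=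
      Finset.Nonempty.map ⟨⟨k, hk⟩, Finset.mem_Ici.mpr le_rfl⟩
    have hproper : S ≠ Finset.univ := by
      intro h
      rw [h, Finset.card_univ, Fintype.card_fin] at hcard
      omega
    have hmemS : ∀ b, b ∈ S ↔ k ≤ ((σ.symm b : Fin n) : ℕ) := by
      intro b
      rw [hSdef, Finset.mem_map_equiv, Finset.mem_Ici]
      rfl
    have hxS : ∀ b ∈ S, Y k ≤ x b := by
      intro b hb
      have h1 : (⟨k, hk⟩ : Fin n) ≤ σ.symm b := (hmemS b).mp hb
      have h2 := hmono h1
      simpa [hYeq k hk, Equiv.apply_symm_apply] using h2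
    have hxSc : ∀ a ∈ Sᶜ, x a ≤ Y m := by
      intro a ha
      have h0 : ¬ (k ≤ ((σ.symm a : Fin n) : ℕ)) := by
        intro h; exact (Finset.mem_compl.mp ha) ((hmemS a).mpr h)
      have hm' : m < n := by omega
      have h1 : σ.symm a ≤ (⟨m, hm'⟩ : Fin n) := by
        simp only [Fin.le_def]; omega
      have h2 := hmono h1
      simpa [hYeq m hm', Equiv.apply_symm_apply] using h2
    have hgap : 0 ≤ Y k - Y m := by
      have := hYmono m k (by omega); linarith
    set Q : ℝ := ∑ i ∈ S, ∑ j ∈ Sᶜ, socT p γ i j with hQdef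
    -- conductance lower bound on Q
    have h1 : ρ ≤ ((1/(n:ℝ)) * Q) / ((((n - k : ℕ) : ℝ) / n) * (((k:ℕ) : ℝ) / n)) := by
      have hmem : ((1/(n:ℝ)) * Q) / ((((n - k : ℕ) : ℝ) / n) * (((k:ℕ) : ℝ) / n)) ∈
          {r : ℝ | ∃ S : Finset (Fin n), S.Nonempty ∧ S ≠ Finset.univ ∧
            r = (∑ i ∈ S, ∑ j ∈ Sᶜ, (1 / (n : ℝ)) * socT p γ i j) /
              (((S.card : ℝ) / n) * ((Sᶜ.card : ℝ) / n))} := by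
        refine ⟨S, hne, hproper, ?_⟩
        rw [hcard, hcardc, hQdef]
        congr 1
        rw [Finset.mul_sum]
        exact Finset.sum_congr rfl fun i _ => by rw [Finset.mul_sum]
      exact hρ.2 hmem
    have hc1 : (0:ℝ) < ((n - k : ℕ) : ℝ) := by
      have : 0 < n - k := by omega
      exact_mod_cast this
    have hc2 : (0:ℝ) < ((k:ℕ) : ℝ) := by positivity
    have hQlb : ρ * (((n - k : ℕ) : ℝ) * ((k:ℕ) : ℝ) / n) ≤ Q := by
      have hdenpos : (0:ℝ) < (((n - k : ℕ) : ℝ) / n) * (((k:ℕ) : ℝ) / n) := by positivity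
      have h2 := (le_div_iff₀ hdenpos).mp h1
      have h3 : ρ * ((((n - k : ℕ) : ℝ) / n) * (((k:ℕ) : ℝ) / n)) * n ≤ (1/(n:ℝ)) * Q * n :=
        mul_le_mul_of_nonneg_right h2 (le_of_lt hnR)
      calc ρ * (((n - k : ℕ) : ℝ) * ((k:ℕ) : ℝ) / n)
          = ρ * ((((n - k : ℕ) : ℝ) / n) * (((k:ℕ) : ℝ) / n)) * n := by field_simp
        _ ≤ (1/(n:ℝ)) * Q * n := h3
        _ = Q := by field_simp
    -- gap times Q is at most B
    have hQ' : ∑ b ∈ S, ∑ a ∈ Sᶜ, socT p γ a b = Q := by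
      rw [hQdef]
      exact Finset.sum_congr rfl fun b _ => Finset.sum_congr rfl fun a _ => socT_symm p γ a b
    have h4 : (Y k - Y m) * Q ≤ ∑ b ∈ S, d b := by
      rw [← hcut S, ← hQ', Finset.mul_sum]
      apply Finset.sum_le_sum
      intro b hb
      rw [Finset.mul_sum]
      apply Finset.sum_le_sum
      intro a ha
      have hT := socT_nonneg p γ hp_nonneg hγ hγ1 a b
      have := hxS b hb
      have := hxSc a ha
      apply mul_le_mul_of_nonneg_right _ hT
      linarith
    have h5 : (Y k - Y m) * (ρ * (((n - k : ℕ) : ℝ) * ((k:ℕ) : ℝ) / n)) ≤ B := by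
      calc (Y k - Y m) * (ρ * (((n - k : ℕ) : ℝ) * ((k:ℕ) : ℝ) / n))
          ≤ (Y k - Y m) * Q := mul_le_mul_of_nonneg_left hQlb hgap
        _ ≤ ∑ b ∈ S, d b := h4
        _ ≤ B := hdS S
    have hpos : (0:ℝ) < ρ * (((n - k : ℕ) : ℝ) * ((k:ℕ) : ℝ) / n) := by positivity
    calc Y k - Y m ≤ B / (ρ * (((n - k : ℕ) : ℝ) * ((k:ℕ) : ℝ) / n)) :=
          (le_div_iff₀ hpos).mpr h5
      _ = B * n / (ρ * (((n - k : ℕ) : ℝ) * ((k:ℕ) : ℝ))) := by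
          field_simp
  -- telescoping
  have htel : Y (n-1) - Y 0 = ∑ m ∈ Finset.range (n-1), (Y (m+1) - Y m) :=
    (Finset.sum_range_sub Y (n-1)).symm
  have hterm : ∀ m ∈ Finset.range (n-1),
      B * n / (ρ * (((n - (m+1) : ℕ) : ℝ) * ((m+1 : ℕ) : ℝ)))
        = (B/ρ) * (1/((n - (m+1) : ℕ) : ℝ) + 1/((m+1 : ℕ) : ℝ)) := by
    intro m hm
    have hm' := Finset.mem_range.mp hm
    have hle : m + 1 ≤ n := by omega
    have hs : ((n - (m+1) : ℕ):ℝ) = (n:ℝ) - ((m+1:ℕ):ℝ) := Nat.cast_sub hle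
    have hc1 : (0:ℝ) < (n:ℝ) - ((m+1:ℕ):ℝ) := by
      have : ((m+1:ℕ):ℝ) < (n:ℝ) := by exact_mod_cast (by omega : m + 1 < n)
      linarith
    have hc2 : (0:ℝ) < ((m+1 : ℕ):ℝ) := by positivity
    rw [hs]
    rw [div_add_div _ _ (ne_of_gt hc1) (ne_of_gt hc2), div_mul_div_comm,
      div_eq_div_iff (by positivity) (by positivity)]
    ring
  have hsum1 : Y (n-1) - Y 0 ≤ ∑ m ∈ Finset.range (n-1),
      (B/ρ) * (1/((n - (m+1) : ℕ) : ℝ) + 1/((m+1 : ℕ) : ℝ)) := by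
    rw [htel]
    calc ∑ m ∈ Finset.range (n-1), (Y (m+1) - Y m)
        ≤ ∑ m ∈ Finset.range (n-1),
            B * n / (ρ * (((n - (m+1) : ℕ) : ℝ) * ((m+1 : ℕ) : ℝ))) :=
          Finset.sum_le_sum (fun m hm => step m (Finset.mem_range.mp hm))
      _ = _ := Finset.sum_congr rfl hterm
  have hh1 : ∑ m ∈ Finset.range (n-1), 1/((m+1 : ℕ):ℝ) = ((harmonic (n-1) : ℚ) : ℝ) := by
    rw [harmonic]
    push_cast
    simp [one_div]
  have hh2 : ∑ m ∈ Finset.range (n-1), 1/((n - (m+1) : ℕ):ℝ)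
      = ∑ m ∈ Finset.range (n-1), 1/((m+1 : ℕ):ℝ) := by
    rw [← Finset.sum_range_reflect (fun j => 1/((j+1 : ℕ):ℝ)) (n-1)]
    refine Finset.sum_congr rfl fun m hm => ?_
    have hm' := Finset.mem_range.mp hm
    have : n - 1 - 1 - m + 1 = n - (m+1) := by omega
    rw [this]
  have hharm : ((harmonic (n-1) : ℚ) : ℝ) ≤ 1 + Real.log n := by
    refine (harmonic_le_one_add_log (n-1)).trans ?_
    have h1 : ((n-1 : ℕ):ℝ) ≤ (n:ℝ) := by exact_mod_cast (by omega : n - 1 ≤ n)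
    have h2 : (0:ℝ) < ((n-1 : ℕ):ℝ) := by exact_mod_cast (by omega : 0 < n - 1)
    have := Real.log_le_log h2 h1
    linarith
  have hBρ : 0 ≤ B / ρ := div_nonneg hBnonneg (le_of_lt hρpos)
  have hmain : Y (n-1) - Y 0 ≤ (B/ρ) * (2 * (1 + Real.log n)) := by
    have e1 : ∑ m ∈ Finset.range (n-1),
        (B/ρ) * (1/((n - (m+1) : ℕ) : ℝ) + 1/((m+1 : ℕ) : ℝ))
        = (B/ρ) * (2 * ((harmonic (n-1) : ℚ) : ℝ)) := by
      rw [← Finset.mul_sum]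
      congr 1
      rw [Finset.sum_add_distrib, hh2, hh1]
      ring
    rw [e1] at hsum1
    refine hsum1.trans ?_
    have : ((harmonic (n-1) : ℚ) : ℝ) ≤ 1 + Real.log n := hharm
    nlinarith [hBρ]
  -- identify the right-hand side
  have hRHS : (∑ i, ∑ j, 2 * p i j * α i j / n) = 4 * B := by
    rw [hBdef, ← mul_assoc, Finset.mul_sum]
    refine Finset.sum_congr rfl fun i _ => ?_
    rw [Finset.mul_sum]
    refine Finset.sum_congr rfl fun j _ => ?_
    rw [div_eq_mul_inv]
    ring
  have hlogn : (0:ℝ) ≤ Real.log n := Real.log_nonneg (by exact_mod_cast hn0)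
  have hRHSnn : 0 ≤ (∑ i, ∑ j, 2 * p i j * α i j / n) * ((1 + Real.log n) / ρ) := by
    rw [hRHS]
    have h1 : (0:ℝ) ≤ (1 + Real.log n) / ρ := by positivity
    positivity
  have hfinal : (B/ρ) * (2 * (1 + Real.log n)) ≤
      (∑ i, ∑ j, 2 * p i j * α i j / n) * ((1 + Real.log n) / ρ) := by
    rw [hRHS]
    have h1 : B/ρ * (2 * (1 + Real.log n)) = (2 * (1 + Real.log n) * B)/ρ := by ring
    have h2 : 4 * B * ((1 + Real.log n)/ρ) = (4 * B * (1 + Real.log n))/ρ := by ring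
    rw [h1, h2]
    apply div_le_div_of_nonneg_right ?_ hρpos.le
    nlinarith [hBnonneg, hlogn]
  -- coordinatewise bound
  have hxx_up : ∀ i : Fin n, x i ≤ Y (n-1) := by
    intro i
    have h1 : σ.symm i ≤ (⟨n-1, by omega⟩ : Fin n) := by
      simp only [Fin.le_def]
      have := (σ.symm i).isLt
      omega
    have h2 := hmono h1
    rw [hYeq (n-1) (by omega)]
    simpa [Equiv.apply_symm_apply] using h2
  have hxx_lo : ∀ i : Fin n, Y 0 ≤ x i := by
    intro i
    have h1 : (⟨0, by omega⟩ : Fin n) ≤ σ.symm i := by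
      simp only [Fin.le_def]
      omega
    have h2 := hmono h1
    rw [hYeq 0 (by omega)]
    simpa [Equiv.apply_symm_apply] using h2
  have hsumx : ∑ i, x i = 0 := by
    simp only [hxdef, Finset.sum_sub_distrib, hπ_sum, Finset.sum_const,
      Finset.card_univ, Fintype.card_fin, nsmul_eq_mul]
    field_simp
    norm_num
  have hY0 : Y 0 ≤ 0 := by
    by_contra h
    push_neg at h
    have h1 : ∑ _i : Fin n, Y 0 ≤ ∑ i, x i := Finset.sum_le_sum fun i _ => hxx_lo i
    rw [hsumx, Finset.sum_const, Finset.card_univ, Fintype.card_fin, nsmul_eq_mul] at h1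
    have h2 : 0 < (n:ℝ) * Y 0 := mul_pos hnR h
    exact absurd h1 (not_le.mpr h2)
  have hYtop : 0 ≤ Y (n-1) := by
    by_contra h
    push_neg at h
    have h1 : ∑ i, x i ≤ ∑ _i : Fin n, Y (n-1) := Finset.sum_le_sum fun i _ => hxx_up i
    rw [hsumx, Finset.sum_const, Finset.card_univ, Fintype.card_fin, nsmul_eq_mul] at h1
    have h2 : (n:ℝ) * Y (n-1) < 0 := mul_neg_of_pos_of_neg hnR h
    exact absurd h1 (not_le.mpr h2)
  rw [pi_norm_le_iff_of_nonneg hRHSnn]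
  intro i
  rw [Real.norm_eq_abs]
  have hup := hxx_up i
  have hlo := hxx_lo i
  rw [abs_le]
  have hB2 : Y (n-1) - Y 0 ≤ (∑ i, ∑ j, 2 * p i j * α i j / n) * ((1 + Real.log n) / ρ) :=
    hmain.trans hfinal
  constructor
  · calc -((∑ i, ∑ j, 2 * p i j * α i j / n) * ((1 + Real.log n) / ρ))
        ≤ -(Y (n-1) - Y 0) := neg_le_neg hB2
      _ = Y 0 - Y (n-1) := by ring
      _ ≤ x i := by linarith [hlo, hYtop]
  · calc x i ≤ Y (n-1) := hup
      _ ≤ Y (n-1) - Y 0 := by linarith [hY0]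
      _ ≤ _ := hB2
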